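/- Let (X,d) be a complete metric space and let F be a multivalued mapping from X to X such that: (i) for every sequence (x_n) converging to a point x ∈ X with lim_n d(F(x_n),x_n) = 0 one has d(F(x),x) = 0; and (ii) there exists α < 1, α ≥ 0, such that for each x ∈ X there exists y ∈ F(x) with d(y,x) = d(F(x),x) and d(F(y),y) ≤ α d(F(x),x). Then F has a fixed point. -/
import Mathlib


open Metric Filter

/-- **Theorem 1.5.** Let `(X,d)` be a complete metric space and `F` a multivalued mapping
from `X` to `X` (nonempty values) such that:
(i) for every sequence `xₙ → x` with `d(F(xₙ),xₙ) → 0` one has `d(F(x),x) = 0`; and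
(ii) for some `0 ≤ α < 1`, for each `x ∈ X` there exists `y ∈ F x` with
`d(y,x) = d(F(x),x)` and `d(F(y),y) ≤ α·d(F(x),x)`. Then `F` has a fixed point. -/
theorem fixed_point_of_nearest_point_contraction
    {X : Type*} [MetricSpace X] [CompleteSpace X] [Nonempty X]
    (F : X → Set X) (hFne : ∀ x, (F x).Nonempty)
    (hreg : ∀ (u : ℕ → X) (x : X), Tendsto u atTop (nhds x) →
      Tendsto (fun n => infDist (u n) (F (u n))) atTop (nhds 0) →
      infDist x (F x) = 0)
    (α : ℝ) (hα : 0 ≤ α) (hα1 : α < 1)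
    (hF : ∀ x : X, ∃ y ∈ F x,
      dist y x = infDist x (F x) ∧
      infDist y (F y) ≤ α * infDist x (F x)) :
    ∃ x : X, x ∈ F x := by
  classical
  set g : X → X := fun x => (hF x).choose with hg
  have hgmem : ∀ x, g x ∈ F x := fun x => (hF x).choose_spec.1
  have hgdist : ∀ x, dist (g x) x = infDist x (F x) :=
    fun x => (hF x).choose_spec.2.1
  have hgcontr : ∀ x, infDist (g x) (F (g x)) ≤ α * infDist x (F x) :=
    fun x => (hF x).choose_spec.2.2
  obtain ⟨x0⟩ := ‹Nonempty X›
  set u : ℕ → X := fun n => g^[n] x0 with hu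
  have hsucc : ∀ n, u (n + 1) = g (u n) := fun n => Function.iterate_succ_apply' g n x0
  set D : ℕ → ℝ := fun n => infDist (u n) (F (u n)) with hD
  have hDgeom : ∀ n, D n ≤ D 0 * α ^ n := by
    intro n
    induction n with
    | zero => simp
    | succ n ih =>
      have h1 : D (n + 1) ≤ α * D n := by
        simp only [hD, hsucc]; exact hgcontr (u n)
      calc D (n + 1) ≤ α * D n := h1
        _ ≤ α * (D 0 * α ^ n) := by
            exact mul_le_mul_of_nonneg_left ih hα
        _ = D 0 * α ^ (n + 1) := by ring
  have hdist : ∀ n, dist (u n) (u (n + 1)) = D n := by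
    intro n
    rw [hsucc, dist_comm]
    exact hgdist (u n)
  have hcauchy : CauchySeq u := by
    apply cauchySeq_of_le_geometric α (D 0) hα1
    intro n
    rw [hdist n]
    exact hDgeom n
  obtain ⟨x, hx⟩ := cauchySeq_tendsto_of_complete hcauchy
  have hDtend : Tendsto D atTop (nhds 0) := by
    have h0 : Tendsto (fun n => D 0 * α ^ n) atTop (nhds 0) := by
      rw [show (0:ℝ) = D 0 * 0 by ring]
      exact (tendsto_pow_atTop_nhds_zero_of_lt_one hα hα1).const_mul _
    exact squeeze_zero (fun n => infDist_nonneg) hDgeom h0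
  have hzero : infDist x (F x) = 0 := hreg u x hx hDtend
  obtain ⟨y, hy, hyd, -⟩ := hF x
  have : y = x := by
    rw [hzero] at hyd
    exact dist_eq_zero.mp hyd
  exact ⟨x, this ▸ hy⟩
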